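/- Let (Δ, 𝔬, m) be a Brauer graph with loops ℓ₁, …, ℓ_n, let p > 1, and let G = (ℤ_p)^n with z_k the element with generator g in the k-th component and identity elsewhere. Define W: 𝒵_Δ → G by W(i,j) = z_k if i is the first occurrence of the loop ℓ_k in the successor sequence of the chosen distinguished edge at its vertex, W(i,j) = z_k^{-1} if i is the second occurrence of ℓ_k, and W(i,j) = id otherwise. Then ω_μ = id for every vertex μ, W is a Brauer weighting, and the Brauer covering graph Δ_W contains no loops. -/

import Mathlib

/-- A Brauer graph `(Γ, 𝔬, m)`, presented via half-edges: `H` is the (finite, nonempty)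
set of half-edges, `σ` is the successor permutation whose cycle at a vertex lists the
incident half-edges in the cyclic order `𝔬` (a loop contributes two half-edges, i.e. is
"listed twice"), `ι` is the fixed-point-free involution pairing the two half-edges of
each edge, `v` assigns to each half-edge its vertex (so the fibres of `v` are exactly
the cycles of `σ`), the graph is connected, and `m` is the multiplicity function. -/
structure BrauerGraph where
  H : Type
  V : Type
  fintypeH : Fintype H
  decEqH : DecidableEq H
  fintypeV : Fintype V
  decEqV : DecidableEq V
  nonemptyH : Nonempty H
  σ : Equiv.Perm H
  ι : Equiv.Perm H
  ι_invol : ∀ h, ι (ι h) = h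
  ι_ne : ∀ h, ι h ≠ h
  v : H → V
  v_surj : Function.Surjective v
  v_eq_iff : ∀ h h', v h = v h' ↔ ∃ n : ℤ, (σ ^ n) h = h'
  connected : ∀ h h' : H, ∃ g ∈ Subgroup.closure ({σ, ι} : Set (Equiv.Perm H)), g h = h'
  m : V → ℕ
  m_pos : ∀ μ, 0 < m μ

attribute [instance] BrauerGraph.fintypeH BrauerGraph.decEqH
attribute [instance] BrauerGraph.fintypeV BrauerGraph.decEqV

namespace BrauerGraph

variable (Γ : BrauerGraph)

/-- The valency of a vertex: the number of incident half-edges (loops counted twice). -/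
noncomputable def val (μ : Γ.V) : ℕ := Nat.card {h : Γ.H // Γ.v h = μ}

end BrauerGraph

/-- A Brauer action of a group `G` on a Brauer graph: a faithful action on half-edges
commuting with the successor permutation (i.e. orientation/successor preserving) and
with the edge involution (i.e. an action by graph automorphisms), and preserving the
multiplicity function. -/
structure BrauerAction (G : Type) [Group G] (Γ : BrauerGraph) where
  e : G →* Equiv.Perm Γ.H
  faithful : Function.Injective e
  comm_σ : ∀ g h, e g (Γ.σ h) = Γ.σ (e g h)
  comm_ι : ∀ g h, e g (Γ.ι h) = Γ.ι (e g h)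
  m_inv : ∀ g h, Γ.m (Γ.v (e g h)) = Γ.m (Γ.v h)

namespace BrauerAction

variable {G : Type} [Group G] {Γ : BrauerGraph}

/-- A free Brauer action: the action is free on the set of edges (loops counted twice,
i.e. on half-edges). -/
def IsFree (A : BrauerAction G Γ) : Prop := ∀ (g : G) (h : Γ.H), A.e g h = h → g = 1

/-- The orbit equivalence relation of the action on half-edges. -/
def orbSetoid (A : BrauerAction G Γ) : Setoid Γ.H where
  r h h' := ∃ g : G, A.e g h = h'
  iseqv := by
    refine ⟨fun h => ⟨1, by simp⟩, ?_, ?_⟩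
    · rintro h h' ⟨g, hg⟩
      exact ⟨g⁻¹, by rw [← hg, ← Equiv.Perm.mul_apply, ← map_mul]; simp⟩
    · rintro a b c ⟨g₁, hg₁⟩ ⟨g₂, hg₂⟩
      exact ⟨g₂ * g₁, by rw [map_mul, Equiv.Perm.mul_apply, hg₁, hg₂]⟩

/-- The orbit equivalence relation of the action restricted to a subset of half-edges. -/
def subOrbSetoid (A : BrauerAction G Γ) (P : Γ.H → Prop) : Setoid {h : Γ.H // P h} where
  r p q := ∃ g : G, A.e g p.1 = q.1
  iseqv := by
    refine ⟨fun p => ⟨1, by simp⟩, ?_, ?_⟩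
    · rintro p q ⟨g, hg⟩
      exact ⟨g⁻¹, by rw [← hg, ← Equiv.Perm.mul_apply, ← map_mul]; simp⟩
    · rintro a b c ⟨g₁, hg₁⟩ ⟨g₂, hg₂⟩
      exact ⟨g₂ * g₁, by rw [map_mul, Equiv.Perm.mul_apply, hg₁, hg₂]⟩

/-- The induced action of `g ∈ G` on vertices (defined via a chosen half-edge
in the fibre of the vertex). -/
noncomputable def vmap (A : BrauerAction G Γ) (g : G) (μ : Γ.V) : Γ.V :=
  Γ.v (A.e g (Γ.v_surj μ).choose)

/-- The valency, in the orbit graph `Γ/G`, of the orbit vertex `μ̄` of `μ`: the number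
of `G`-orbits of half-edges incident with a vertex in the orbit of `μ`. -/
noncomputable def orbVal (A : BrauerAction G Γ) (μ : Γ.V) : ℕ :=
  Nat.card (Quotient (A.subOrbSetoid (fun h => ∃ a : G, Γ.v (A.e a h) = μ)))

/-- The multiplicity function `m̄(μ̄) = val(μ)·m(μ)/val(μ̄)` of the orbit graph,
expressed on representatives. -/
noncomputable def mbar (A : BrauerAction G Γ) (μ : Γ.V) : ℕ :=
  Γ.val μ * Γ.m μ / A.orbVal μ

end BrauerAction

namespace BrauerGraph

variable (Γ : BrauerGraph) {G : Type} [CommGroup G]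

/-- `ω_μ`: the product of the values of a successor weighting `W` over all successor
pairs at the vertex `μ` (a successor pair `(i, σ i)` is identified with the half-edge
`i`). -/
noncomputable def omega (W : Γ.H → G) (μ : Γ.V) : G :=
  ∏ h ∈ Finset.univ.filter (fun h => Γ.v h = μ), W h

/-- `ω(i₁, i_{r+1})`: the product of the weights along the first `r` steps of the
successor sequence of the half-edge `h`. -/
noncomputable def wpath (W : Γ.H → G) (h : Γ.H) (r : ℕ) : G :=
  ∏ t ∈ Finset.range r, W ((Γ.σ ^ t) h)

/-- The generating relation for the equivalence classes `[i, H_{μ,s}]` defining the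
vertices of the Brauer covering graph `Δ_W`: a pair `(i, g)` (representing the pair of
`i` and the coset `H_{v i}·g`) is related to `(σ i, g·W(i))`, and to `(i, g·ω_{v i})`
(the latter identifies representatives of the same coset of `H_μ = ⟨ω_μ⟩`). -/
def covRel (W : Γ.H → G) : Γ.H × G → Γ.H × G → Prop := fun p q =>
  (q.1 = Γ.σ p.1 ∧ q.2 = p.2 * W p.1) ∨ (q.1 = p.1 ∧ q.2 = p.2 * Γ.omega W (Γ.v p.1))

end BrauerGraph

namespace LoopRemovalAux

variable (Γ : BrauerGraph) {G : Type} [CommGroup G]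

noncomputable def base (μ : Γ.V) : Γ.H := (Γ.v_surj μ).choose

lemma v_base (μ : Γ.V) : Γ.v (base Γ μ) = μ := (Γ.v_surj μ).choose_spec

lemma v_pow (h : Γ.H) (t : ℕ) : Γ.v ((Γ.σ ^ t) h) = Γ.v h :=
  ((Γ.v_eq_iff h ((Γ.σ ^ t) h)).mpr ⟨(t : ℤ), by rw [zpow_natCast]⟩).symm

lemma exists_nat_pow {h h' : Γ.H} (hv : Γ.v h = Γ.v h') : ∃ t : ℕ, (Γ.σ ^ t) h = h' := by
  obtain ⟨n, hn⟩ := (Γ.v_eq_iff h h').mp hv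
  have h0 : (0:ℤ) < (orderOf Γ.σ : ℤ) := by exact_mod_cast orderOf_pos Γ.σ
  refine ⟨(n % (orderOf Γ.σ : ℤ)).toNat, ?_⟩
  rw [← zpow_natCast, Int.toNat_of_nonneg (Int.emod_nonneg n h0.ne'), zpow_mod_orderOf, hn]

/-- minimal `t` with `σ^t (base (v h)) = h`. -/
noncomputable def nmin (h : Γ.H) : ℕ :=
  Nat.find (exists_nat_pow Γ (h := base Γ (Γ.v h)) (h' := h) (v_base Γ (Γ.v h)))

lemma nmin_spec (h : Γ.H) : (Γ.σ ^ nmin Γ h) (base Γ (Γ.v h)) = h :=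
  Nat.find_spec (exists_nat_pow Γ (h := base Γ (Γ.v h)) (h' := h) (v_base Γ (Γ.v h)))

/-- the period of the basepoint of `μ` under `σ`. -/
noncomputable def per (μ : Γ.V) : ℕ := Function.minimalPeriod ⇑Γ.σ (base Γ μ)

lemma isPeriodic (μ : Γ.V) : Function.IsPeriodicPt ⇑Γ.σ (orderOf Γ.σ) (base Γ μ) := by
  unfold Function.IsPeriodicPt Function.IsFixedPt
  rw [Equiv.Perm.iterate_eq_pow, pow_orderOf_eq_one]
  rfl

lemma per_pos (μ : Γ.V) : 0 < per Γ μ :=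
  (isPeriodic Γ μ).minimalPeriod_pos (orderOf_pos Γ.σ)

lemma pow_mod_per (μ : Γ.V) (n : ℕ) : (Γ.σ ^ (n % per Γ μ)) (base Γ μ) = (Γ.σ ^ n) (base Γ μ) := by
  have := Function.iterate_mod_minimalPeriod_eq (f := ⇑Γ.σ) (x := base Γ μ) (n := n)
  rwa [Equiv.Perm.iterate_eq_pow, Equiv.Perm.iterate_eq_pow] at this

lemma pow_inj (μ : Γ.V) {s t : ℕ} (hs : s < per Γ μ) (ht : t < per Γ μ)
    (h : (Γ.σ ^ s) (base Γ μ) = (Γ.σ ^ t) (base Γ μ)) : s = t := by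
  refine (Function.iterate_eq_iterate_iff_of_lt_minimalPeriod (f := ⇑Γ.σ) hs ht).mp ?_
  simpa [Equiv.Perm.iterate_eq_pow] using h

lemma nmin_lt (h : Γ.H) : nmin Γ h < per Γ (Γ.v h) := by
  have hspec := nmin_spec Γ h
  have hmod : (Γ.σ ^ (nmin Γ h % per Γ (Γ.v h))) (base Γ (Γ.v h)) = h := by
    rw [pow_mod_per, hspec]
  have hle : nmin Γ h ≤ nmin Γ h % per Γ (Γ.v h) := Nat.find_min' _ hmod
  have := Nat.mod_le (nmin Γ h) (per Γ (Γ.v h))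
  have heq : nmin Γ h = nmin Γ h % per Γ (Γ.v h) := le_antisymm hle this
  rw [heq]
  exact Nat.mod_lt _ (per_pos Γ _)

lemma window (W : Γ.H → G) (μ : Γ.V) (s : ℕ) :
    ∏ t ∈ Finset.range (per Γ μ), W ((Γ.σ ^ (s + t)) (base Γ μ)) = Γ.omega W μ := by
  rw [BrauerGraph.omega]
  refine Finset.prod_bij (fun t _ => (Γ.σ ^ (s + t)) (base Γ μ)) ?_ ?_ ?_ (fun a ha => rfl)
  · intro t _
    simp [Finset.mem_filter, v_pow, v_base]
  · intro t₁ h₁ t₂ h₂ hE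
    simp only [Finset.mem_range] at h₁ h₂
    try dsimp only at hE
    rw [pow_add, pow_add, Equiv.Perm.mul_apply, Equiv.Perm.mul_apply] at hE
    exact pow_inj Γ μ h₁ h₂ ((Γ.σ ^ s).injective hE)
  · intro y hy
    simp only [Finset.mem_filter, Finset.mem_univ, true_and] at hy
    obtain ⟨t₀, ht₀⟩ := exists_nat_pow Γ (h := base Γ μ) (h' := y) (by rw [v_base, hy])
    refine ⟨(t₀ + per Γ μ - s % per Γ μ) % per Γ μ,
      Finset.mem_range.mpr (Nat.mod_lt _ (per_pos Γ μ)), ?_⟩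
    try dsimp only
    have hdm := Nat.div_add_mod s (per Γ μ)
    have hsle : s % per Γ μ ≤ per Γ μ := le_of_lt (Nat.mod_lt _ (per_pos Γ μ))
    have key : (s + (t₀ + per Γ μ - s % per Γ μ) % per Γ μ) % per Γ μ = t₀ % per Γ μ := by
      have h2 : (s + (t₀ + per Γ μ - s % per Γ μ) % per Γ μ) % per Γ μ
          = (s + (t₀ + per Γ μ - s % per Γ μ)) % per Γ μ :=
        Nat.ModEq.add_left s (Nat.mod_modEq _ _)
      have h3 : s + (t₀ + per Γ μ - s % per Γ μ) = t₀ + per Γ μ * (s / per Γ μ + 1) := by rw [Nat.mul_add, Nat.mul_one]; omega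
      rw [h2, h3, Nat.add_mul_mod_self_left]
    rw [← pow_mod_per Γ μ (s + (t₀ + per Γ μ - s % per Γ μ) % per Γ μ), key, pow_mod_per, ht₀]

lemma prod_range_add_per (W : Γ.H → G) (μ : Γ.V) (hω : Γ.omega W μ = 1) (a q : ℕ) :
    ∏ t ∈ Finset.range (a + q * per Γ μ), W ((Γ.σ ^ t) (base Γ μ))
      = ∏ t ∈ Finset.range a, W ((Γ.σ ^ t) (base Γ μ)) := by
  induction q with
  | zero => simp
  | succ q ih =>
      have : a + (q + 1) * per Γ μ = (a + q * per Γ μ) + per Γ μ := by ring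
      rw [this, Finset.prod_range_add, ih, window Γ W μ (a + q * per Γ μ) , hω, mul_one]

lemma prod_well_defined_le (W : Γ.H → G) (μ : Γ.V) (hω : Γ.omega W μ = 1) {t₁ t₂ : ℕ}
    (hle : t₁ ≤ t₂) (hE : (Γ.σ ^ t₁) (base Γ μ) = (Γ.σ ^ t₂) (base Γ μ)) :
    ∏ t ∈ Finset.range t₂, W ((Γ.σ ^ t) (base Γ μ))
      = ∏ t ∈ Finset.range t₁, W ((Γ.σ ^ t) (base Γ μ)) := by
  obtain ⟨d, rfl⟩ := Nat.exists_eq_add_of_le hle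
  have hfix : (Γ.σ ^ d) (base Γ μ) = base Γ μ := by
    rw [pow_add, Equiv.Perm.mul_apply] at hE
    exact (Γ.σ ^ t₁).injective hE.symm
  have hper : Function.IsPeriodicPt ⇑Γ.σ d (base Γ μ) := by
    unfold Function.IsPeriodicPt Function.IsFixedPt
    rw [Equiv.Perm.iterate_eq_pow]
    exact hfix
  obtain ⟨q, hq⟩ := hper.minimalPeriod_dvd
  rw [hq, mul_comm]
  exact prod_range_add_per Γ W μ hω t₁ q

lemma prod_well_defined (W : Γ.H → G) (μ : Γ.V) (hω : Γ.omega W μ = 1) {t₁ t₂ : ℕ}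
    (hE : (Γ.σ ^ t₁) (base Γ μ) = (Γ.σ ^ t₂) (base Γ μ)) :
    ∏ t ∈ Finset.range t₁, W ((Γ.σ ^ t) (base Γ μ))
      = ∏ t ∈ Finset.range t₂, W ((Γ.σ ^ t) (base Γ μ)) := by
  rcases le_total t₁ t₂ with hle | hle
  · exact (prod_well_defined_le Γ W μ hω hle hE).symm
  · exact prod_well_defined_le Γ W μ hω hle hE.symm

/-- the weight-product along the `σ`-path from the basepoint to `h`. -/
noncomputable def S (W : Γ.H → G) (h : Γ.H) : G :=
  ∏ t ∈ Finset.range (nmin Γ h), W ((Γ.σ ^ t) (base Γ (Γ.v h)))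

lemma v_sigma (h : Γ.H) : Γ.v (Γ.σ h) = Γ.v h := by
  have := v_pow Γ h 1
  rwa [pow_one] at this

lemma S_step (W : Γ.H → G) (hω : ∀ μ, Γ.omega W μ = 1) (h : Γ.H) :
    S Γ W (Γ.σ h) = S Γ W h * W h := by
  have hv : Γ.v (Γ.σ h) = Γ.v h := v_sigma Γ h
  have hs : (Γ.σ ^ nmin Γ (Γ.σ h)) (base Γ (Γ.v h)) = (Γ.σ ^ (nmin Γ h + 1)) (base Γ (Γ.v h)) := by
    rw [pow_succ', Equiv.Perm.mul_apply, nmin_spec Γ h]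
    have := nmin_spec Γ (Γ.σ h)
    rwa [hv] at this
  have := prod_well_defined Γ W (Γ.v h) (hω _) hs
  rw [S, S, hv, this, Finset.prod_range_succ, nmin_spec Γ h]

/-- The invariant separating the two half-edges of each loop in the covering graph. -/
noncomputable def Phi (W : Γ.H → G) (x : Γ.H × G) : Γ.V × G :=
  (Γ.v x.1, x.2 * (S Γ W x.1)⁻¹)

lemma Phi_covRel (W : Γ.H → G) (hω : ∀ μ, Γ.omega W μ = 1) {x y : Γ.H × G}
    (hxy : Γ.covRel W x y) : Phi Γ W x = Phi Γ W y := by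
  rcases hxy with ⟨h1, h2⟩ | ⟨h1, h2⟩
  · obtain ⟨hx, gx⟩ := x
    obtain ⟨hy, gy⟩ := y
    dsimp only at h1 h2
    subst h1; subst h2
    simp only [Phi, v_sigma, S_step Γ W hω, Prod.mk.injEq, true_and, mul_inv]
    rw [mul_comm (S Γ W hx)⁻¹ (W hx)⁻¹, ← mul_assoc, mul_inv_cancel_right]
  · obtain ⟨hx, gx⟩ := x
    obtain ⟨hy, gy⟩ := y
    dsimp only at h1 h2
    subst h1; subst h2
    simp [Phi, hω]

lemma Phi_eqvGen (W : Γ.H → G) (hω : ∀ μ, Γ.omega W μ = 1) {x y : Γ.H × G}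
    (hxy : Relation.EqvGen (Γ.covRel W) x y) : Phi Γ W x = Phi Γ W y := by
  induction hxy with
  | rel _ _ h => exact Phi_covRel Γ W hω h
  | refl => rfl
  | symm _ _ _ ih => exact ih.symm
  | trans _ _ _ _ _ ih1 ih2 => exact ih1.trans ih2

end LoopRemovalAux

/-- removal of loops: Let `(Δ, 𝔬, m)` be a Brauer graph whose loops are
listed via a selection `sel` of one half-edge of each loop (a half-edge `h` with
`v(ι h) = v h` and `sel h = true` is the "first occurrence" of the loop), let `p > 1`
and `G = (ℤ_p)^{loops}`, and let `W` assign to a loop half-edge its basis element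
`z_k` (first occurrence) or `z_k⁻¹` (second occurrence), and `id` to all other
half-edges.  Then `ω_μ = id` for every vertex, `W` is a Brauer weighting, and the
Brauer covering graph `Δ_W` contains no loops. -/
theorem loop_removal (Γ : BrauerGraph) (p : ℕ) (hp : 1 < p)
    (sel : Γ.H → Bool)
    (hsel : ∀ h : Γ.H, Γ.v (Γ.ι h) = Γ.v h → sel (Γ.ι h) = !sel h)
    (W : Γ.H → ({l : Γ.H // Γ.v (Γ.ι l) = Γ.v l ∧ sel l = true} → Multiplicative (ZMod p)))
    (hWdef : ∀ (h : Γ.H) (l : {l : Γ.H // Γ.v (Γ.ι l) = Γ.v l ∧ sel l = true}),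
      W h l = if l.1 = h then Multiplicative.ofAdd (1 : ZMod p)
        else if l.1 = Γ.ι h then (Multiplicative.ofAdd (1 : ZMod p))⁻¹ else 1) :
    (∀ μ : Γ.V, Γ.omega W μ = 1) ∧
    (∀ μ : Γ.V, orderOf (Γ.omega W μ) ∣ Γ.m μ) ∧
    (∀ (h : Γ.H) (g : {l : Γ.H // Γ.v (Γ.ι l) = Γ.v l ∧ sel l = true} → Multiplicative (ZMod p)),
      ¬ Relation.EqvGen (Γ.covRel W) (h, g) (Γ.ι h, g)) := by
  classical
  haveI : Fact (1 < p) := ⟨hp⟩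
  open LoopRemovalAux in
  have homega : ∀ μ : Γ.V, Γ.omega W μ = 1 := by
    intro μ
    funext l
    simp only [BrauerGraph.omega, Finset.prod_apply, Pi.one_apply]
    have step : ∀ h : Γ.H, W h l =
        (if h = l.1 then Multiplicative.ofAdd (1 : ZMod p) else 1) *
        (if h = Γ.ι l.1 then (Multiplicative.ofAdd (1 : ZMod p))⁻¹ else 1) := by
      intro h
      rw [hWdef]
      by_cases e1 : l.1 = h
      · have h2 : ¬ (h = Γ.ι l.1) := by
          rw [← e1]
          exact fun hc => Γ.ι_ne l.1 (by rw [← hc])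
        rw [if_pos e1, if_pos e1.symm, if_neg h2, mul_one]
      · by_cases e2 : l.1 = Γ.ι h
        · have h2 : h = Γ.ι l.1 := by rw [e2, Γ.ι_invol]
          have h1 : ¬ (h = l.1) := fun hc => e1 hc.symm
          rw [if_neg e1, if_pos e2, if_neg h1, if_pos h2, one_mul]
        · have h1 : ¬ (h = l.1) := fun hc => e1 hc.symm
          have h2 : ¬ (h = Γ.ι l.1) := fun hc => e2 (by rw [hc, Γ.ι_invol])
          rw [if_neg e1, if_neg e2, if_neg h1, if_neg h2, one_mul]
    rw [Finset.prod_congr rfl (fun h _ => step h), Finset.prod_mul_distrib,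
        Finset.prod_ite_eq', Finset.prod_ite_eq']
    simp only [Finset.mem_filter, Finset.mem_univ, true_and, l.2.1]
    by_cases hc : Γ.v l.1 = μ <;> simp [hc]
  refine ⟨homega, fun μ => by rw [homega μ]; simp, ?_⟩
  intro h g hE
  have hΦ := LoopRemovalAux.Phi_eqvGen Γ W homega hE
  have hv : Γ.v h = Γ.v (Γ.ι h) := congrArg Prod.fst hΦ
  have hg : g * (LoopRemovalAux.S Γ W h)⁻¹ = g * (LoopRemovalAux.S Γ W (Γ.ι h))⁻¹ :=
    congrArg Prod.snd hΦ
  have hS : LoopRemovalAux.S Γ W h = LoopRemovalAux.S Γ W (Γ.ι h) :=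
    inv_injective (mul_left_cancel hg)
  set B := LoopRemovalAux.base Γ (Γ.v h) with hBdef
  have hB : LoopRemovalAux.base Γ (Γ.v (Γ.ι h)) = B := by rw [← hv]
  set n₁ := LoopRemovalAux.nmin Γ h with hn₁def
  set n₂ := LoopRemovalAux.nmin Γ (Γ.ι h) with hn₂def
  have spec1 : (Γ.σ ^ n₁) B = h := LoopRemovalAux.nmin_spec Γ h
  have spec2 : (Γ.σ ^ n₂) B = Γ.ι h := by
    have := LoopRemovalAux.nmin_spec Γ (Γ.ι h)
    rwa [hB] at this
  have hn1 : n₁ < LoopRemovalAux.per Γ (Γ.v h) := LoopRemovalAux.nmin_lt Γ h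
  have hn2 : n₂ < LoopRemovalAux.per Γ (Γ.v h) := by
    have := LoopRemovalAux.nmin_lt Γ (Γ.ι h)
    rwa [← hv] at this
  have hprod : ∏ t ∈ Finset.range n₁, W ((Γ.σ ^ t) B)
      = ∏ t ∈ Finset.range n₂, W ((Γ.σ ^ t) B) := by
    have hS' := hS
    simp only [LoopRemovalAux.S] at hS'
    rwa [hB] at hS'
  have hne : n₁ ≠ n₂ := by
    intro e
    exact Γ.ι_ne h (by rw [← spec2, ← e, spec1])
  -- construct the selected loop half-edge l'
  have hloop : Γ.v (Γ.ι h) = Γ.v h := hv.symm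
  obtain ⟨l', hl'⟩ : ∃ l' : {l : Γ.H // Γ.v (Γ.ι l) = Γ.v l ∧ sel l = true},
      l'.1 = h ∨ l'.1 = Γ.ι h := by
    by_cases hselh : sel h = true
    · exact ⟨⟨h, hloop, hselh⟩, Or.inl rfl⟩
    · have hfalse : sel h = false := by revert hselh; cases sel h <;> simp
      have hsel' : sel (Γ.ι h) = true := by rw [hsel h hloop, hfalse]; rfl
      refine ⟨⟨Γ.ι h, ?_, hsel'⟩, Or.inr rfl⟩
      rw [Γ.ι_invol]
      exact hv
  -- the key nonvanishing computation
  have key : ∀ (x : Γ.H) (a c : ℕ), a < c → c < LoopRemovalAux.per Γ (Γ.v h) →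
      (Γ.σ ^ a) B = x → (Γ.σ ^ c) B = Γ.ι x → (l'.1 = x ∨ l'.1 = Γ.ι x) →
      (∏ t ∈ Finset.Ico a c, W ((Γ.σ ^ t) B)) l' ≠ 1 := by
    intro x a c hac hcper hax hcx hl
    rw [Finset.prod_apply]
    have hside : ∀ t ∈ Finset.Ico a c, t ≠ a → W ((Γ.σ ^ t) B) l' = 1 := by
      intro t ht hta
      have htc : t < c := (Finset.mem_Ico.mp ht).2
      have h1 : (Γ.σ ^ t) B ≠ x := by
        intro e
        exact hta (LoopRemovalAux.pow_inj Γ (Γ.v h) (htc.trans hcper) (hac.trans hcper)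
          (e.trans hax.symm))
      have h2 : (Γ.σ ^ t) B ≠ Γ.ι x := by
        intro e
        exact absurd (LoopRemovalAux.pow_inj Γ (Γ.v h) (htc.trans hcper) hcper
          (e.trans hcx.symm)) htc.ne
      rw [hWdef]
      rcases hl with hl | hl
      · rw [if_neg (fun hc' => h1 (hl.symm.trans hc').symm),
            if_neg (fun hc' => h2 (by rw [hl.symm.trans hc', Γ.ι_invol]))]
      · rw [if_neg (fun hc' => h2 (hl.symm.trans hc').symm),
            if_neg (fun hc' => h1 (Γ.ι.injective (hl.symm.trans hc')).symm)]
    rw [Finset.prod_eq_single_of_mem a (Finset.mem_Ico.mpr ⟨le_refl a, hac⟩) hside, hax, hWdef]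
    have hone : (1 : ZMod p) ≠ 0 := one_ne_zero
    rcases hl with hl | hl
    · rw [if_pos hl]
      simpa using hone
    · rw [if_neg (fun hc' => Γ.ι_ne x (hc'.symm.trans hl).symm), if_pos hl]
      simp only [ne_eq, inv_eq_one]
      simpa using hone
  rcases hne.lt_or_gt with hlt | hlt
  · have h0 := Finset.prod_Ico_consecutive (fun t => W ((Γ.σ ^ t) B)) (Nat.zero_le n₁) hlt.le
    rw [← Finset.range_eq_Ico, ← Finset.range_eq_Ico, ← hprod] at h0
    have hone : ∏ t ∈ Finset.Ico n₁ n₂, W ((Γ.σ ^ t) B) = 1 :=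
      mul_left_cancel (h0.trans (mul_one _).symm)
    exact key h n₁ n₂ hlt hn2 spec1 spec2 hl' (by rw [hone]; rfl)
  · have h0 := Finset.prod_Ico_consecutive (fun t => W ((Γ.σ ^ t) B)) (Nat.zero_le n₂) hlt.le
    rw [← Finset.range_eq_Ico, ← Finset.range_eq_Ico, hprod] at h0
    have hone : ∏ t ∈ Finset.Ico n₂ n₁, W ((Γ.σ ^ t) B) = 1 :=
      mul_left_cancel (h0.trans (mul_one _).symm)
    have hl'' : l'.1 = Γ.ι h ∨ l'.1 = Γ.ι (Γ.ι h) := by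
      rcases hl' with hl | hl
      · exact Or.inr (by rw [Γ.ι_invol]; exact hl)
      · exact Or.inl hl
    exact key (Γ.ι h) n₂ n₁ hlt hn1 spec2 (by rw [Γ.ι_invol]; exact spec1) hl''
      (by rw [hone]; rfl)
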